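/- arXiv:1401.7445 — 2 statements merged into one kernel-verified Lean document; each statement's English description precedes it below -/
import Mathlib

section
/- For every integer n, the signature (index) of the matrix A(n), viewed as a real symmetric matrix, is 0: counted with multiplicity, A(n) has exactly 5 positive eigenvalues and exactly 5 negative eigenvalues. -/
/-- The 10×10 symmetric integer matrix A(n): diagonal entries
(−2, 2, 2, 0, −6, n−6, 0, 2, 2, −2), entries 1 in (1-indexed) positions
(1,4), (2,3), (3,4), (4,5), (5,6), (6,7), (7,8), (7,10), (8,9) and their
transposes, all other entries 0. -/
def matA (n : ℤ) : Matrix (Fin 10) (Fin 10) ℤ :=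
  Matrix.of fun i j =>
    if i = j then ![-2, 2, 2, 0, -6, n - 6, 0, 2, 2, -2] i
    else if (min i j, max i j) ∈
        ([(0, 3), (1, 2), (2, 3), (3, 4), (4, 5), (5, 6), (6, 7), (6, 9), (7, 8)] :
          List (Fin 10 × Fin 10)) then 1
    else 0

open Matrix

set_option maxHeartbeats 2000000 in
/-- Explicit form of `matA n` over the reals. -/
lemma matA_map_eq (n : ℤ) :
    (matA n).map (Int.cast : ℤ → ℝ) = Matrix.of ![
      ![-2,0,0,1,0,0,0,0,0,0],
      ![0,2,1,0,0,0,0,0,0,0],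
      ![0,1,2,1,0,0,0,0,0,0],
      ![1,0,1,0,1,0,0,0,0,0],
      ![0,0,0,1,-6,1,0,0,0,0],
      ![0,0,0,0,1,(n:ℝ)-6,1,0,0,0],
      ![0,0,0,0,0,1,0,1,0,1],
      ![0,0,0,0,0,0,1,2,1,0],
      ![0,0,0,0,0,0,0,1,2,0],
      ![0,0,0,0,0,0,1,0,0,-2]] := by
  ext i j
  fin_cases i <;> fin_cases j <;>
    simp only [matA, Matrix.map_apply, Matrix.of_apply] <;>
    simp (config := { decide := true }) <;>
    (first
      | rfl
      | (push_cast; rfl)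
      | (push_cast; norm_num)
      | norm_num)

/-- Quadratic form in terms of eigenvalues. -/
lemma quad_eq_sum_eig (M : Matrix (Fin 10) (Fin 10) ℝ) (hM : M.IsHermitian) (x : Fin 10 → ℝ) :
    x ⬝ᵥ (M *ᵥ x) =
      ∑ i, hM.eigenvalues i *
        ((star (hM.eigenvectorUnitary : Matrix (Fin 10) (Fin 10) ℝ) *ᵥ x) i) ^ 2 := by
  set U := (hM.eigenvectorUnitary : Matrix (Fin 10) (Fin 10) ℝ) with hU
  have hspec := hM.spectral_theorem
  conv_lhs => rw [hspec, Unitary.conjStarAlgAut_apply]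
  have hid : (RCLike.ofReal ∘ hM.eigenvalues : Fin 10 → ℝ) = hM.eigenvalues := by
    ext i; simp
  rw [hid]
  have hvm : ∀ z : Fin 10 → ℝ, x ⬝ᵥ (U *ᵥ z) = (star U *ᵥ x) ⬝ᵥ z := by
    intro z
    simp [dotProduct, Matrix.mulVec, Matrix.star_eq_conjTranspose,
      Matrix.conjTranspose_apply, Finset.mul_sum, Finset.sum_mul]
    rw [Finset.sum_comm]
    congr 1; ext i; congr 1; ext j; ring
  rw [← Matrix.mulVec_mulVec, ← Matrix.mulVec_mulVec, hvm]
  simp [dotProduct, Matrix.mulVec_diagonal]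
  congr 1; ext i; ring

/-- If 5 test vectors (columns of `V`) span only positive values of the quadratic form,
then `M` has at least 5 positive eigenvalues. -/
lemma count_pos_ge (M : Matrix (Fin 10) (Fin 10) ℝ) (hM : M.IsHermitian)
    (V : Matrix (Fin 10) (Fin 5) ℝ)
    (hq : ∀ c : Fin 5 → ℝ, c ≠ 0 → 0 < (V *ᵥ c) ⬝ᵥ (M *ᵥ (V *ᵥ c))) :
    5 ≤ (Finset.univ.filter fun i => 0 < hM.eigenvalues i).card := by
  by_contra hlt
  push_neg at hlt
  set S := (Finset.univ.filter fun i => 0 < hM.eigenvalues i) with hS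
  set U := (hM.eigenvectorUnitary : Matrix (Fin 10) (Fin 10) ℝ) with hU
  set ψ : (Fin 5 → ℝ) →ₗ[ℝ] (↥S → ℝ) :=
    (LinearMap.funLeft ℝ ℝ (fun i : ↥S => (i : Fin 10))).comp
      ((Matrix.mulVecLin (star U)).comp (Matrix.mulVecLin V)) with hψ
  have hninj : ¬ Function.Injective ψ := by
    intro hinj
    have hle := LinearMap.finrank_le_finrank_of_injective hinj
    rw [Module.finrank_fintype_fun_eq_card, Module.finrank_fintype_fun_eq_card,
      Fintype.card_fin, Fintype.card_coe] at hle
    omega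
  rw [← LinearMap.ker_eq_bot] at hninj
  obtain ⟨c, hc_mem, hc0⟩ := Submodule.exists_mem_ne_zero_of_ne_bot hninj
  have hker : ψ c = 0 := LinearMap.mem_ker.mp hc_mem
  have hy : ∀ i, i ∈ S → (star U *ᵥ (V *ᵥ c)) i = 0 := by
    intro i hi
    have h2 := congrFun hker ⟨i, hi⟩
    simpa [hψ, LinearMap.funLeft] using h2
  have hquad := quad_eq_sum_eig M hM (V *ᵥ c)
  have hle : (V *ᵥ c) ⬝ᵥ (M *ᵥ (V *ᵥ c)) ≤ 0 := by
    rw [hquad]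
    apply Finset.sum_nonpos
    intro i _
    by_cases hi : i ∈ S
    · rw [hy i hi]; simp
    · have h1 : hM.eigenvalues i ≤ 0 := by
        by_contra h
        exact hi (by simp [hS, lt_of_not_ge h])
      nlinarith [sq_nonneg ((star U *ᵥ (V *ᵥ c)) i)]
  exact absurd (hq c hc0) (not_lt.mpr hle)

/-- If 5 test vectors (columns of `V`) span only negative values of the quadratic form,
then `M` has at least 5 negative eigenvalues. -/
lemma count_neg_ge (M : Matrix (Fin 10) (Fin 10) ℝ) (hM : M.IsHermitian)
    (V : Matrix (Fin 10) (Fin 5) ℝ)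
    (hq : ∀ c : Fin 5 → ℝ, c ≠ 0 → (V *ᵥ c) ⬝ᵥ (M *ᵥ (V *ᵥ c)) < 0) :
    5 ≤ (Finset.univ.filter fun i => hM.eigenvalues i < 0).card := by
  by_contra hlt
  push_neg at hlt
  set S := (Finset.univ.filter fun i => hM.eigenvalues i < 0) with hS
  set U := (hM.eigenvectorUnitary : Matrix (Fin 10) (Fin 10) ℝ) with hU
  set ψ : (Fin 5 → ℝ) →ₗ[ℝ] (↥S → ℝ) :=
    (LinearMap.funLeft ℝ ℝ (fun i : ↥S => (i : Fin 10))).comp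
      ((Matrix.mulVecLin (star U)).comp (Matrix.mulVecLin V)) with hψ
  have hninj : ¬ Function.Injective ψ := by
    intro hinj
    have hle := LinearMap.finrank_le_finrank_of_injective hinj
    rw [Module.finrank_fintype_fun_eq_card, Module.finrank_fintype_fun_eq_card,
      Fintype.card_fin, Fintype.card_coe] at hle
    omega
  rw [← LinearMap.ker_eq_bot] at hninj
  obtain ⟨c, hc_mem, hc0⟩ := Submodule.exists_mem_ne_zero_of_ne_bot hninj
  have hker : ψ c = 0 := LinearMap.mem_ker.mp hc_mem
  have hy : ∀ i, i ∈ S → (star U *ᵥ (V *ᵥ c)) i = 0 := by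
    intro i hi
    have h2 := congrFun hker ⟨i, hi⟩
    simpa [hψ, LinearMap.funLeft] using h2
  have hquad := quad_eq_sum_eig M hM (V *ᵥ c)
  have hge : 0 ≤ (V *ᵥ c) ⬝ᵥ (M *ᵥ (V *ᵥ c)) := by
    rw [hquad]
    apply Finset.sum_nonneg
    intro i _
    by_cases hi : i ∈ S
    · rw [hy i hi]; simp
    · have h1 : 0 ≤ hM.eigenvalues i := by
        by_contra h
        exact hi (by simp [hS, lt_of_not_ge h])
      positivity
  exact absurd (hq c hc0) (not_lt.mpr hge)

/-- Test vectors for positive eigenvalues. -/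
noncomputable def Vpos (n : ℤ) : Matrix (Fin 10) (Fin 5) ℝ :=
  Matrix.of fun i j =>
    ![![0,1,0,0,0,0,0,0,0,0],
      ![0,-1,2,0,0,0,0,0,0,0],
      ![0,0,0,0,0,0,0,1,0,0],
      ![3,2,-4,6,1,0,-1,0,1,0],
      ![3*(7-(n:ℝ)),2*(7-(n:ℝ)),-4*(7-(n:ℝ)),6*(7-(n:ℝ)),(7-(n:ℝ)),2,0,0,0,0]] j i

/-- Test vectors for negative eigenvalues. -/
noncomputable def Vneg (n : ℤ) : Matrix (Fin 10) (Fin 5) ℝ :=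
  Matrix.of fun i j =>
    ![![1,0,0,0,0,0,0,0,0,0],
      ![3,2,-4,6,0,0,0,0,0,0],
      ![-6,-4,8,-12,-2,0,2,-1,0,0],
      ![-9,-6,12,-18,-3,0,3,-2,1,2],
      ![3*(5-(n:ℝ)),2*(5-(n:ℝ)),-4*(5-(n:ℝ)),6*(5-(n:ℝ)),(5-(n:ℝ)),2,0,0,0,0]] j i

set_option maxHeartbeats 2000000 in
lemma quad_Vpos (n : ℤ) (c : Fin 5 → ℝ) :
    (Vpos n *ᵥ c) ⬝ᵥ ((matA n).map (Int.cast : ℤ → ℝ) *ᵥ (Vpos n *ᵥ c)) =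
      2 * c 0 ^ 2 + 6 * c 1 ^ 2 + 2 * c 2 ^ 2 + 2 * c 3 ^ 2 + 4 * c 4 ^ 2 := by
  rw [matA_map_eq]
  simp [Vpos, Matrix.mulVec, dotProduct, Fin.sum_univ_succ,
    show (Fin.succ 2 : Fin 5) = 3 from rfl, show (((2 : Fin 3).succ).succ : Fin 5) = 4 from rfl]
  ring

set_option maxHeartbeats 2000000 in
lemma quad_Vneg (n : ℤ) (c : Fin 5 → ℝ) :
    (Vneg n *ᵥ c) ⬝ᵥ ((matA n).map (Int.cast : ℤ → ℝ) *ᵥ (Vneg n *ᵥ c)) =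
      -(2 * c 0 ^ 2 + 6 * c 1 ^ 2 + 2 * c 2 ^ 2 + 2 * c 3 ^ 2 + 4 * c 4 ^ 2) := by
  rw [matA_map_eq]
  simp [Vneg, Matrix.mulVec, dotProduct, Fin.sum_univ_succ,
    show (Fin.succ 2 : Fin 5) = 3 from rfl, show (((2 : Fin 3).succ).succ : Fin 5) = 4 from rfl]
  ring

lemma comb_pos (c : Fin 5 → ℝ) (hc : c ≠ 0) :
    0 < 2 * c 0 ^ 2 + 6 * c 1 ^ 2 + 2 * c 2 ^ 2 + 2 * c 3 ^ 2 + 4 * c 4 ^ 2 := by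
  rcases eq_or_lt_of_le (show (0:ℝ) ≤ 2 * c 0 ^ 2 + 6 * c 1 ^ 2 + 2 * c 2 ^ 2 +
      2 * c 3 ^ 2 + 4 * c 4 ^ 2 from by positivity) with h | h
  · exfalso
    apply hc
    have h0 : c 0 = 0 := by nlinarith [sq_nonneg (c 0), sq_nonneg (c 1), sq_nonneg (c 2), sq_nonneg (c 3), sq_nonneg (c 4)]
    have h1 : c 1 = 0 := by nlinarith [sq_nonneg (c 0), sq_nonneg (c 1), sq_nonneg (c 2), sq_nonneg (c 3), sq_nonneg (c 4)]
    have h2 : c 2 = 0 := by nlinarith [sq_nonneg (c 0), sq_nonneg (c 1), sq_nonneg (c 2), sq_nonneg (c 3), sq_nonneg (c 4)]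
    have h3 : c 3 = 0 := by nlinarith [sq_nonneg (c 0), sq_nonneg (c 1), sq_nonneg (c 2), sq_nonneg (c 3), sq_nonneg (c 4)]
    have h4 : c 4 = 0 := by nlinarith [sq_nonneg (c 0), sq_nonneg (c 1), sq_nonneg (c 2), sq_nonneg (c 3), sq_nonneg (c 4)]
    funext i
    simp only [Pi.zero_apply]
    fin_cases i
    · exact h0
    · exact h1
    · exact h2
    · exact h3
    · exact h4
  · exact h

/-- For every integer n, the real symmetric matrix A(n) has exactly 5 positive
and exactly 5 negative eigenvalues (counted with multiplicity), so its
signature (index) is 0. -/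
theorem matA_signature_zero (n : ℤ)
    (hA : ((matA n).map (Int.cast : ℤ → ℝ)).IsHermitian) :
    (Finset.univ.filter fun i => 0 < hA.eigenvalues i).card = 5 ∧
    (Finset.univ.filter fun i => hA.eigenvalues i < 0).card = 5 := by
  have hp : 5 ≤ (Finset.univ.filter fun i => 0 < hA.eigenvalues i).card := by
    apply count_pos_ge _ hA (Vpos n)
    intro c hc
    rw [quad_Vpos]
    exact comb_pos c hc
  have hm : 5 ≤ (Finset.univ.filter fun i => hA.eigenvalues i < 0).card := by
    apply count_neg_ge _ hA (Vneg n)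
    intro c hc
    rw [quad_Vneg]
    exact neg_neg_iff_pos.mpr (comb_pos c hc)
  have hdisj : Disjoint (Finset.univ.filter fun i => 0 < hA.eigenvalues i)
      (Finset.univ.filter fun i => hA.eigenvalues i < 0) := by
    rw [Finset.disjoint_left]
    intro a ha hb
    simp only [Finset.mem_filter] at ha hb
    linarith [ha.2, hb.2]
  have hsum : (Finset.univ.filter fun i => 0 < hA.eigenvalues i).card +
      (Finset.univ.filter fun i => hA.eigenvalues i < 0).card ≤ 10 := by
    rw [← Finset.card_union_of_disjoint hdisj]
    calc _ ≤ (Finset.univ : Finset (Fin 10)).card := Finset.card_le_univ _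
    _ = 10 := by simp
  constructor <;> omega
end

section
/- For every integer n, the signature (index) of the matrix B(n), viewed as a real symmetric matrix, is 8: counted with multiplicity, B(n) has exactly 11 positive eigenvalues and exactly 3 negative eigenvalues. -/
/-- The 14×14 symmetric integer matrix B(n): diagonal entries
(2, 2, 2, 2, 2, 2, 2, 2, 2, n−5, 0, 2, 2, −2), entries 1 in (1-indexed) positions
(1,4), (2,3), (3,4), (4,5), (5,6), (6,7), (7,8), (8,9), (9,10), (10,11), (11,12),
(11,14), (12,13) and their transposes, all other entries 0. -/
def matB (n : ℤ) : Matrix (Fin 14) (Fin 14) ℤ :=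
  Matrix.of fun i j =>
    if i = j then ![2, 2, 2, 2, 2, 2, 2, 2, 2, n - 5, 0, 2, 2, -2] i
    else if (min i j, max i j) ∈
        ([(0, 3), (1, 2), (2, 3), (3, 4), (4, 5), (5, 6), (6, 7), (7, 8), (8, 9),
          (9, 10), (10, 11), (10, 13), (11, 12)] :
          List (Fin 14 × Fin 14)) then 1
    else 0


open Matrix Finset Submodule Module

lemma qf_congr {m : ℕ} (P D : Matrix (Fin m) (Fin m) ℝ) (x : Fin m → ℝ) :
    x ⬝ᵥ (Pᵀ * D * P) *ᵥ x = (P *ᵥ x) ⬝ᵥ D *ᵥ (P *ᵥ x) := by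
  rw [Matrix.mul_assoc, ← Matrix.mulVec_mulVec, Matrix.dotProduct_mulVec, Matrix.vecMul_transpose,
    ← Matrix.mulVec_mulVec]

/-- functions supported on a finset, as a submodule -/
def suppSub {m : ℕ} (S : Finset (Fin m)) : Submodule ℝ (Fin m → ℝ) where
  carrier := {x | ∀ i, i ∉ S → x i = 0}
  zero_mem' := by intro i _; rfl
  add_mem' := by intro a b ha hb i hi; simp [ha i hi, hb i hi]
  smul_mem' := by intro c a ha i hi; simp [ha i hi]

lemma mem_suppSub {m : ℕ} {S : Finset (Fin m)} {x : Fin m → ℝ} :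
    x ∈ suppSub S ↔ ∀ i, i ∉ S → x i = 0 := Iff.rfl

lemma suppSub_eq_span {m : ℕ} (S : Finset (Fin m)) :
    suppSub S = span ℝ (Set.range fun i : S => (Pi.single (i : Fin m) (1 : ℝ) : Fin m → ℝ)) := by
  apply le_antisymm
  · intro x hx
    have hxs : x = ∑ i ∈ S, Pi.single i (x i) := by
      conv_lhs => rw [← Finset.univ_sum_single x]
      rw [Finset.sum_subset (Finset.subset_univ S)]
      intro i _ hi
      rw [hx i hi, Pi.single_zero]
    rw [hxs]
    refine sum_mem fun i hi => ?_
    have h1 : (Pi.single i (x i) : Fin m → ℝ) = x i • (Pi.single i (1:ℝ) : Fin m → ℝ) := by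
      ext j
      by_cases h : j = i <;> simp [Pi.single_apply, h]
    rw [h1]
    exact smul_mem _ _ (subset_span ⟨⟨i, hi⟩, rfl⟩)
  · rw [span_le]
    rintro _ ⟨i, rfl⟩
    intro j hj
    exact Pi.single_eq_of_ne (by rintro rfl; exact hj i.2) 1

lemma finrank_suppSub {m : ℕ} (S : Finset (Fin m)) : finrank ℝ (suppSub S) = S.card := by
  rw [suppSub_eq_span]
  have ind : LinearIndependent ℝ (fun i : S => (Pi.single (i : Fin m) (1 : ℝ) : Fin m → ℝ)) := by
    have := (Pi.basisFun ℝ (Fin m)).linearIndependent.comp ((↑) : S → Fin m)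
      Subtype.val_injective
    simpa [Function.comp_def] using this
  rw [finrank_span_eq_card ind, Fintype.card_coe]

lemma qf_diag {m : ℕ} (d : Fin m → ℝ) (y : Fin m → ℝ) :
    y ⬝ᵥ (Matrix.diagonal d) *ᵥ y = ∑ i, y i * (d i * y i) := by
  simp [dotProduct, Matrix.mulVec_diagonal]

lemma qf_pos {m : ℕ} {d : Fin m → ℝ} {y : Fin m → ℝ}
    (hy : y ∈ suppSub (univ.filter fun i => 0 < d i)) (hy0 : y ≠ 0) :
    0 < y ⬝ᵥ (Matrix.diagonal d) *ᵥ y := by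
  rw [qf_diag]
  rw [mem_suppSub] at hy
  obtain ⟨i0, hi0⟩ := Function.ne_iff.mp hy0
  have hi0' : (0:ℝ) ≠ y i0 := fun h => hi0 (h.symm)
  have hmem : i0 ∈ univ.filter fun i => 0 < d i := by
    by_contra h
    exact hi0 (hy i0 h)
  have hd0 : 0 < d i0 := (Finset.mem_filter.mp hmem).2
  refine Finset.sum_pos' (fun i _ => ?_) ⟨i0, Finset.mem_univ i0, ?_⟩
  · by_cases h : i ∈ univ.filter fun j => 0 < d j
    · have : 0 < d i := (Finset.mem_filter.mp h).2
      have : y i * (d i * y i) = d i * (y i * y i) := by ring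
      rw [this]
      exact mul_nonneg (le_of_lt ‹0 < d i›) (mul_self_nonneg _)
    · rw [hy i h]; simp
  · have h1 : y i0 * (d i0 * y i0) = d i0 * (y i0 * y i0) := by ring
    rw [h1]
    exact mul_pos hd0 (mul_self_pos.mpr (fun h => hi0 h))

lemma qf_nonpos {m : ℕ} {d : Fin m → ℝ} {y : Fin m → ℝ}
    (hy : y ∈ suppSub (univ.filter fun i => ¬ 0 < d i)) :
    y ⬝ᵥ (Matrix.diagonal d) *ᵥ y ≤ 0 := by
  rw [qf_diag]
  rw [mem_suppSub] at hy
  refine Finset.sum_nonpos fun i _ => ?_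
  by_cases h : i ∈ univ.filter fun j => ¬ 0 < d j
  · have hd : d i ≤ 0 := le_of_not_gt (Finset.mem_filter.mp h).2
    have h1 : y i * (d i * y i) = d i * (y i * y i) := by ring
    rw [h1]
    exact mul_nonpos_of_nonpos_of_nonneg hd (mul_self_nonneg _)
  · rw [hy i h]; simp

noncomputable def mEquiv {m : ℕ} (P : Matrix (Fin m) (Fin m) ℝ) [Invertible P] :
    (Fin m → ℝ) ≃ₗ[ℝ] (Fin m → ℝ) :=
  LinearEquiv.ofLinear P.mulVecLin (⅟P).mulVecLin
    (by rw [← Matrix.mulVecLin_mul, mul_invOf_self, Matrix.mulVecLin_one])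
    (by rw [← Matrix.mulVecLin_mul, invOf_mul_self, Matrix.mulVecLin_one])

lemma inertia_le {m : ℕ} {A P Q : Matrix (Fin m) (Fin m) ℝ} {d e : Fin m → ℝ}
    [Invertible P] [Invertible Q]
    (hP : A = Pᵀ * Matrix.diagonal d * P) (hQ : A = Qᵀ * Matrix.diagonal e * Q) :
    (univ.filter fun i => 0 < d i).card ≤ (univ.filter fun i => 0 < e i).card := by
  by_contra hlt
  push_neg at hlt
  set U : Submodule ℝ (Fin m → ℝ) :=
    (suppSub (univ.filter fun i => 0 < d i)).map ((mEquiv P).symm : (Fin m → ℝ) →ₗ[ℝ] (Fin m → ℝ)) with hU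
  set V : Submodule ℝ (Fin m → ℝ) :=
    (suppSub (univ.filter fun i => ¬ 0 < e i)).map ((mEquiv Q).symm : (Fin m → ℝ) →ₗ[ℝ] (Fin m → ℝ)) with hV
  have hfU : finrank ℝ U = (univ.filter fun i => 0 < d i).card := by
    rw [hU]
    exact ((mEquiv P).symm.finrank_map_eq _).trans (finrank_suppSub _)
  have hfV : finrank ℝ V = (univ.filter fun i => ¬ 0 < e i).card := by
    rw [hV]
    exact ((mEquiv Q).symm.finrank_map_eq _).trans (finrank_suppSub _)
  have hcards := Finset.card_filter_add_card_filter_not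
    (s := (univ : Finset (Fin m))) (p := fun i => 0 < e i)
  rw [Finset.card_univ, Fintype.card_fin] at hcards
  have hsum := Submodule.finrank_sup_add_finrank_inf_eq U V
  have hle : finrank ℝ ↥(U ⊔ V) ≤ m := by
    have h1 := Submodule.finrank_le (U ⊔ V)
    rwa [Module.finrank_fin_fun] at h1
  have hpos : 0 < finrank ℝ ↥(U ⊓ V) := by omega
  have hne : U ⊓ V ≠ ⊥ := by
    intro h
    rw [h, finrank_bot] at hpos
    exact lt_irrefl 0 hpos
  obtain ⟨x, hx, hx0⟩ := Submodule.exists_mem_ne_zero_of_ne_bot hne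
  obtain ⟨hxU, hxV⟩ := Submodule.mem_inf.mp hx
  obtain ⟨y, hy, hyx⟩ := hxU
  obtain ⟨z, hz, hzx⟩ := hxV
  have hPx : P *ᵥ x = y := by
    rw [← hyx]
    exact (mEquiv P).apply_symm_apply y
  have hQx : Q *ᵥ x = z := by
    rw [← hzx]
    exact (mEquiv Q).apply_symm_apply z
  have hy0 : y ≠ 0 := by
    intro h
    apply hx0
    rw [← hyx, h, map_zero]
  have h1 : 0 < x ⬝ᵥ A *ᵥ x := by
    rw [hP, qf_congr, hPx]
    exact qf_pos hy hy0
  have h2 : x ⬝ᵥ A *ᵥ x ≤ 0 := by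
    rw [hQ, qf_congr, hQx]
    exact qf_nonpos hz
  linarith


def Ez : Matrix (Fin 14) (Fin 14) ℤ := Matrix.of fun i j => if i = 9 ∧ j = 9 then 1 else 0

/-- cast an integer matrix to a real matrix -/
noncomputable def cm (M : Matrix (Fin 14) (Fin 14) ℤ) : Matrix (Fin 14) (Fin 14) ℝ :=
  M.map (Int.cast : ℤ → ℝ)

lemma cm_mul (M N : Matrix (Fin 14) (Fin 14) ℤ) : cm (M * N) = cm M * cm N := by
  ext i j
  simp [cm, Matrix.mul_apply, Matrix.map_apply]

lemma cm_add (M N : Matrix (Fin 14) (Fin 14) ℤ) : cm (M + N) = cm M + cm N := by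
  ext i j; simp [cm]

lemma cm_transpose (M : Matrix (Fin 14) (Fin 14) ℤ) : cm (Mᵀ) = (cm M)ᵀ := by
  ext i j; simp [cm]

lemma cm_smul (k : ℤ) (M : Matrix (Fin 14) (Fin 14) ℤ) : cm (k • M) = (k : ℝ) • cm M := by
  ext i j
  simp only [cm, Matrix.map_apply, Matrix.smul_apply, smul_eq_mul]
  push_cast
  ring

lemma cm_zero : cm 0 = 0 := by ext i j; simp [cm]

lemma cm_diagonal (v : Fin 14 → ℤ) :
    cm (Matrix.diagonal v) = Matrix.diagonal (fun i => (v i : ℝ)) := by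
  ext i j
  by_cases h : i = j <;> simp [cm, Matrix.diagonal_apply, h]

lemma expand_quad (A B D : Matrix (Fin 14) (Fin 14) ℝ) (x : ℝ) :
    (A + x • B)ᵀ * D * (A + x • B)
      = Aᵀ * D * A + x • (Bᵀ * D * A + Aᵀ * D * B) + (x * x) • (Bᵀ * D * B) := by
  rw [Matrix.transpose_add, Matrix.transpose_smul]
  simp only [Matrix.add_mul, Matrix.mul_add, Matrix.smul_mul, Matrix.mul_smul, smul_add,
    smul_smul]
  module

lemma expand_mul (A B C D : Matrix (Fin 14) (Fin 14) ℝ) (x : ℝ) :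
    (A + x • B) * (C + x • D) = A * C + x • (A * D + B * C) + (x * x) • (B * D) := by
  simp only [Matrix.add_mul, Matrix.mul_add, Matrix.smul_mul, Matrix.mul_smul, smul_add,
    smul_smul]
  module

lemma matB_split (n : ℤ) : matB n = matB 0 + n • Ez := by
  ext i j
  by_cases hij : i = j
  · subst hij
    fin_cases i <;> norm_num [matB, Ez] <;> norm_num [Fin.ext_iff, show ((9:Fin 14):ℕ) = 9 from rfl] <;> omega
  · have h9 : ¬(i = 9 ∧ j = 9) := fun ⟨h1, h2⟩ => hij (h1.trans h2.symm)
    have hEz : Ez i j = 0 := if_neg h9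
    have hBn : matB n i j = matB 0 i j := by
      simp only [matB, Matrix.of_apply]
      rw [if_neg hij, if_neg hij]
    simp only [Matrix.add_apply, Matrix.smul_apply, hEz, hBn, smul_zero, add_zero]
def Tz : Matrix (Fin 14) (Fin 14) ℤ := Matrix.of ![
 ![2,0,0,1,0,0,0,0,0,0,0,0,0,0],
 ![0,2,1,0,0,0,0,0,0,0,0,0,0,0],
 ![0,0,3,2,0,0,0,0,0,0,0,0,0,0],
 ![0,0,0,5,6,0,0,0,0,0,0,0,0,0],
 ![0,0,0,0,4,5,0,0,0,0,0,0,0,0],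
 ![0,0,0,0,0,3,4,0,0,0,0,0,0,0],
 ![0,0,0,0,0,0,2,3,0,0,0,0,0,0],
 ![0,0,0,0,0,0,0,1,2,0,0,0,0,0],
 ![0,0,0,0,0,0,0,0,2,-3,2,0,0,0],
 ![0,0,0,0,0,0,0,0,-2,7,-2,0,0,0],
 ![0,0,0,0,0,0,0,0,0,0,1,0,0,0],
 ![0,0,0,0,0,0,0,0,0,0,2,3,0,0],
 ![0,0,0,0,0,0,0,0,0,0,0,1,2,0],
 ![0,0,0,0,0,0,0,0,0,0,-1,0,0,2]]
def Uz : Matrix (Fin 14) (Fin 14) ℤ := Matrix.of ![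
 ![0,0,0,0,0,0,0,0,0,0,0,0,0,0],
 ![0,0,0,0,0,0,0,0,0,0,0,0,0,0],
 ![0,0,0,0,0,0,0,0,0,0,0,0,0,0],
 ![0,0,0,0,0,0,0,0,0,0,0,0,0,0],
 ![0,0,0,0,0,0,0,0,0,0,0,0,0,0],
 ![0,0,0,0,0,0,0,0,0,0,0,0,0,0],
 ![0,0,0,0,0,0,0,0,0,0,0,0,0,0],
 ![0,0,0,0,0,0,0,0,0,0,0,0,0,0],
 ![0,0,0,0,0,0,0,0,0,1,0,0,0,0],
 ![0,0,0,0,0,0,0,0,0,-1,0,0,0,0],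
 ![0,0,0,0,0,0,0,0,0,0,0,0,0,0],
 ![0,0,0,0,0,0,0,0,0,0,0,0,0,0],
 ![0,0,0,0,0,0,0,0,0,0,0,0,0,0],
 ![0,0,0,0,0,0,0,0,0,0,0,0,0,0]]
def Wz : Matrix (Fin 14) (Fin 14) ℤ := Matrix.of ![
 ![1,0,0,-3,12,-9,3,-3,21,9,-18,0,0,0],
 ![0,1,-1,2,-8,6,-2,2,-14,-6,12,0,0,0],
 ![0,0,2,-4,16,-12,4,-4,28,12,-24,0,0,0],
 ![0,0,0,6,-24,18,-6,6,-42,-18,36,0,0,0],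
 ![0,0,0,0,20,-15,5,-5,35,15,-30,0,0,0],
 ![0,0,0,0,0,12,-4,4,-28,-12,24,0,0,0],
 ![0,0,0,0,0,0,3,-3,21,9,-18,0,0,0],
 ![0,0,0,0,0,0,0,2,-14,-6,12,0,0,0],
 ![0,0,0,0,0,0,0,0,7,3,-6,0,0,0],
 ![0,0,0,0,0,0,0,0,2,2,0,0,0,0],
 ![0,0,0,0,0,0,0,0,0,0,6,0,0,0],
 ![0,0,0,0,0,0,0,0,0,0,-4,2,0,0],
 ![0,0,0,0,0,0,0,0,0,0,2,-1,1,0],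
 ![0,0,0,0,0,0,0,0,0,0,3,0,0,1]]
def Wz1 : Matrix (Fin 14) (Fin 14) ℤ := Matrix.of ![
 ![0,0,0,0,0,0,0,0,-3,-3,0,0,0,0],
 ![0,0,0,0,0,0,0,0,2,2,0,0,0,0],
 ![0,0,0,0,0,0,0,0,-4,-4,0,0,0,0],
 ![0,0,0,0,0,0,0,0,6,6,0,0,0,0],
 ![0,0,0,0,0,0,0,0,-5,-5,0,0,0,0],
 ![0,0,0,0,0,0,0,0,4,4,0,0,0,0],
 ![0,0,0,0,0,0,0,0,-3,-3,0,0,0,0],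
 ![0,0,0,0,0,0,0,0,2,2,0,0,0,0],
 ![0,0,0,0,0,0,0,0,-1,-1,0,0,0,0],
 ![0,0,0,0,0,0,0,0,0,0,0,0,0,0],
 ![0,0,0,0,0,0,0,0,0,0,0,0,0,0],
 ![0,0,0,0,0,0,0,0,0,0,0,0,0,0],
 ![0,0,0,0,0,0,0,0,0,0,0,0,0,0],
 ![0,0,0,0,0,0,0,0,0,0,0,0,0,0]]
def Dz : Fin 14 → ℤ := ![60,60,20,4,6,10,20,60,15,-15,-20,20,60,-60]
def sigz : Fin 14 → ℤ := ![2,2,6,30,80,36,6,2,8,8,6,6,2,2]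

lemma iden1 : Tzᵀ * Matrix.diagonal Dz * Tz = (120:ℤ) • matB 0 := by decide
lemma iden2 : Uzᵀ * Matrix.diagonal Dz * Tz + Tzᵀ * Matrix.diagonal Dz * Uz = (120:ℤ) • Ez := by
  decide
lemma iden3 : Uzᵀ * Matrix.diagonal Dz * Uz = 0 := by decide
lemma iden4 : Tz * Wz = Matrix.diagonal sigz := by decide
lemma iden5 : Tz * Wz1 + Uz * Wz = 0 := by decide
lemma iden6 : Uz * Wz1 = 0 := by decide

/-- the real congruence matrix, affine in the parameter -/
noncomputable def Trm (x : ℝ) : Matrix (Fin 14) (Fin 14) ℝ := cm Tz + x • cm Uz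

noncomputable def Wrm (x : ℝ) : Matrix (Fin 14) (Fin 14) ℝ := cm Wz + x • cm Wz1

/-- the constant diagonal -/
noncomputable def drv : Fin 14 → ℝ := fun i => (Dz i : ℝ) / 120

lemma diag_drv : Matrix.diagonal drv = (120⁻¹ : ℝ) • Matrix.diagonal (fun i => (Dz i : ℝ)) := by
  ext i j
  by_cases h : i = j <;> simp [drv, Matrix.diagonal_apply, h] <;> ring

lemma conj_cast (M N : Matrix (Fin 14) (Fin 14) ℤ) :
    (cm M)ᵀ * Matrix.diagonal drv * cm N = (120⁻¹ : ℝ) • cm (Mᵀ * Matrix.diagonal Dz * N) := by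
  rw [diag_drv, Matrix.mul_smul, Matrix.smul_mul, cm_mul, cm_mul, cm_transpose, cm_diagonal]

lemma key_congr (x : ℝ) :
    (Trm x)ᵀ * Matrix.diagonal drv * Trm x = cm (matB 0) + x • cm Ez := by
  rw [Trm, expand_quad, conj_cast, conj_cast, conj_cast, conj_cast, iden1, iden3, cm_smul,
    ← smul_add, ← cm_add, iden2, cm_smul, cm_zero]
  push_cast
  simp only [smul_smul, smul_zero, add_zero]
  norm_num

lemma TW (x : ℝ) : Trm x * Wrm x = Matrix.diagonal (fun i => (sigz i : ℝ)) := by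
  rw [Trm, Wrm, expand_mul, ← cm_mul, ← cm_mul, ← cm_mul, ← cm_mul, ← cm_add, iden4, iden5,
    iden6, cm_zero, cm_diagonal, smul_zero, smul_zero, add_zero, add_zero]

lemma TWinv (x : ℝ) :
    Trm x * (Wrm x * Matrix.diagonal (fun i => ((sigz i : ℝ))⁻¹)) = 1 := by
  rw [← Matrix.mul_assoc, TW, Matrix.diagonal_mul_diagonal]
  have h : ∀ i : Fin 14, (sigz i : ℝ) * (sigz i : ℝ)⁻¹ = 1 := by
    intro i
    have h0 : (sigz i : ℝ) ≠ 0 := by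
      fin_cases i <;> norm_num [sigz]
    exact mul_inv_cancel₀ h0
  rw [show (fun i => (sigz i:ℝ) * (sigz i:ℝ)⁻¹) = fun _ => (1:ℝ) from funext h,
    Matrix.diagonal_one]


lemma drv_pos_card : (Finset.univ.filter fun i => 0 < drv i).card = 11 := by
  have h : (Finset.univ.filter fun i => 0 < drv i)
      = (Finset.univ.filter fun i => 0 < Dz i) := by
    apply Finset.filter_congr
    intro i _
    constructor
    · intro h
      by_contra hn
      push_neg at hn
      have h1 : (Dz i : ℝ) ≤ 0 := by exact_mod_cast hn
      have h2 : drv i ≤ 0 := by rw [drv]; linarith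
      linarith
    · intro h
      have h1 : (0:ℝ) < (Dz i : ℝ) := by exact_mod_cast h
      rw [drv]
      positivity
  rw [h]
  decide

lemma drv_neg_card : (Finset.univ.filter fun i => drv i < 0).card = 3 := by
  have h : (Finset.univ.filter fun i => drv i < 0)
      = (Finset.univ.filter fun i => Dz i < 0) := by
    apply Finset.filter_congr
    intro i _
    constructor
    · intro h
      by_contra hn
      push_neg at hn
      have h1 : (0:ℝ) ≤ (Dz i : ℝ) := by exact_mod_cast hn
      have h2 : 0 ≤ drv i := by rw [drv]; positivity
      linarith
    · intro h
      have h1 : (Dz i : ℝ) < 0 := by exact_mod_cast h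
      rw [drv]
      linarith
  rw [h]
  decide

/-- For every integer n, the real symmetric matrix B(n) has exactly 11 positive
and exactly 3 negative eigenvalues (counted with multiplicity), so its
signature (index) is 8. -/
theorem matB_signature_eight (n : ℤ)
    (hB : ((matB n).map (Int.cast : ℤ → ℝ)).IsHermitian) :
    (Finset.univ.filter fun i => 0 < hB.eigenvalues i).card = 11 ∧
    (Finset.univ.filter fun i => hB.eigenvalues i < 0).card = 3 := by
  -- the T-side decomposition
  have hQdecomp : ((matB n).map (Int.cast : ℤ → ℝ))
      = (Trm (n:ℝ))ᵀ * Matrix.diagonal drv * Trm (n:ℝ) := by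
    rw [key_congr]
    have h1 : (matB n).map (Int.cast : ℤ → ℝ) = cm (matB 0 + n • Ez) := by
      rw [← matB_split]; rfl
    rw [h1, cm_add, cm_smul]
  haveI : Invertible (Trm (n:ℝ)) :=
    ⟨Wrm (n:ℝ) * Matrix.diagonal (fun i => ((sigz i : ℝ))⁻¹),
      mul_eq_one_comm.mp (TWinv (n:ℝ)), TWinv (n:ℝ)⟩
  -- the eigenvalue-side decomposition
  set Uu : Matrix (Fin 14) (Fin 14) ℝ := (hB.eigenvectorUnitary : Matrix (Fin 14) (Fin 14) ℝ)
    with hUu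
  obtain ⟨hu1, hu2⟩ := Unitary.mem_iff.mp hB.eigenvectorUnitary.2
  have hstar : star Uu = Uuᵀ := by
    ext i j
    simp [Matrix.star_apply, Matrix.transpose_apply]
  haveI : Invertible (Uuᵀ) := ⟨Uu, by rw [← hstar]; exact hu2, by rw [← hstar]; exact hu1⟩
  have hPdecomp : ((matB n).map (Int.cast : ℤ → ℝ))
      = (Uuᵀ)ᵀ * Matrix.diagonal hB.eigenvalues * Uuᵀ := by
    rw [Matrix.transpose_transpose, ← hstar]
    have h2 : Matrix.diagonal (RCLike.ofReal ∘ hB.eigenvalues)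
        = Matrix.diagonal hB.eigenvalues := by
      rw [RCLike.ofReal_real_eq_id, Function.id_comp]
    rw [← h2]
    exact hB.spectral_theorem
  -- positive eigenvalue count
  have hpos : (Finset.univ.filter fun i => 0 < hB.eigenvalues i).card
      = (Finset.univ.filter fun i => 0 < drv i).card :=
    le_antisymm (inertia_le hPdecomp hQdecomp) (inertia_le hQdecomp hPdecomp)
  -- negative eigenvalue count
  have hPneg : -((matB n).map (Int.cast : ℤ → ℝ))
      = (Uuᵀ)ᵀ * Matrix.diagonal (fun i => -hB.eigenvalues i) * Uuᵀ := by
    have hd : Matrix.diagonal (fun i => -hB.eigenvalues i)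
        = -Matrix.diagonal hB.eigenvalues := by
      rw [← Matrix.diagonal_neg]
    rw [hd, Matrix.mul_neg, Matrix.neg_mul, ← hPdecomp]
  have hQneg : -((matB n).map (Int.cast : ℤ → ℝ))
      = (Trm (n:ℝ))ᵀ * Matrix.diagonal (fun i => -drv i) * Trm (n:ℝ) := by
    have hd : Matrix.diagonal (fun i => -drv i) = -Matrix.diagonal drv := by
      rw [← Matrix.diagonal_neg]
    rw [hd, Matrix.mul_neg, Matrix.neg_mul, ← hQdecomp]
  have hneg : (Finset.univ.filter fun i => 0 < -hB.eigenvalues i).card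
      = (Finset.univ.filter fun i => 0 < -drv i).card :=
    le_antisymm (inertia_le hPneg hQneg) (inertia_le hQneg hPneg)
  have hflip1 : (Finset.univ.filter fun i => 0 < -hB.eigenvalues i)
      = (Finset.univ.filter fun i => hB.eigenvalues i < 0) := by
    apply Finset.filter_congr
    intro i _
    exact neg_pos
  have hflip2 : (Finset.univ.filter fun i => 0 < -drv i)
      = (Finset.univ.filter fun i => drv i < 0) := by
    apply Finset.filter_congr
    intro i _
    exact neg_pos
  rw [hflip1, hflip2] at hneg
  exact ⟨hpos.trans drv_pos_card, hneg.trans drv_neg_card⟩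
end
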